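/- Let C be a positive prevariety and α : A* → M a morphism. For every C-morphism η : A* → (N,≤), every C-pair (s,t) for α is an η-pair: there exist u, v ∈ A* with η(u) ≤ η(v), α(u) = s, α(v) = t. -/
import Mathlib

/-- First half of Lemma `pairmor`: for a positive prevariety `C`, a morphism
`α : A* → M` and a `C`-morphism `η : A* → (N,≤)`, every `C`-pair `(s,t)` for
`α` is an `η`-pair: there are words `u, v` with `η u ≤ η v`, `α u = s`,
`α v = t`. -/
theorem stmt_13 {A : Type*} [Fintype A] {M : Type*} [Monoid M] [Fintype M]
    {N : Type*} [Monoid N] [Fintype N] [PartialOrder N]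
    (C : Set (Set (FreeMonoid A)))
    (hreg : ∀ L ∈ C, ∃ (P : Type) (_ : Monoid P) (_ : Fintype P),
      ∃ (φ : FreeMonoid A →* P) (F : Set P), L = φ ⁻¹' F)
    (hempty : ∅ ∈ C) (huniv : Set.univ ∈ C)
    (hunion : ∀ L ∈ C, ∀ K ∈ C, L ∪ K ∈ C)
    (hinter : ∀ L ∈ C, ∀ K ∈ C, L ∩ K ∈ C)
    (hquot : ∀ L ∈ C, ∀ w : FreeMonoid A,
      {u | w * u ∈ L} ∈ C ∧ {u | u * w ∈ L} ∈ C)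
    (α : FreeMonoid A →* M)
    (η : FreeMonoid A →* N) (hηsurj : Function.Surjective η)
    (hcompat : ∀ a b c d : N, a ≤ b → c ≤ d → a * c ≤ b * d)
    (hη : ∀ F : Set N, IsUpperSet F → η ⁻¹' F ∈ C)
    (s t : M)
    (hpair : ¬ ∃ K ∈ C, α ⁻¹' {s} ⊆ K ∧ K ∩ α ⁻¹' {t} = ∅) :
    ∃ u v : FreeMonoid A, η u ≤ η v ∧ α u = s ∧ α v = t := by
  by_contra h
  apply hpair
  refine ⟨η ⁻¹' {n | ∃ u, α u = s ∧ η u ≤ n}, hη _ ?_, ?_, ?_⟩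
  · intro a b hab ⟨u, hu, hle⟩
    exact ⟨u, hu, hle.trans hab⟩
  · intro w hw
    exact ⟨w, hw, le_refl _⟩
  · ext w
    simp only [Set.mem_inter_iff, Set.mem_preimage, Set.mem_setOf_eq,
      Set.mem_singleton_iff, Set.mem_empty_iff_false, iff_false, not_and]
    rintro ⟨u, hu, hle⟩ hw
    exact h ⟨u, w, hle, hu, hw⟩
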